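/- arXiv:2001.10396 — 2 statements merged into one kernel-verified Lean document; each statement's English description precedes it below -/
import Mathlib

section
/- For a symmetric positive semidefinite real N×N matrix K and α > 0, the effective dimension Tr(K(K+αI)^{-1}) satisfies Tr(K(K+αI)^{-1}) ≤ log det(I + α^{-1}K). -/
theorem effective_dim_le_logdet {N : ℕ} (K : Matrix (Fin N) (Fin N) ℝ)
    (hK : K.PosSemidef) (α : ℝ) (hα : 0 < α) :
    (K * (K + α • (1 : Matrix (Fin N) (Fin N) ℝ))⁻¹).trace ≤
      Real.log ((1 + α⁻¹ • K).det) := by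
  classical
  have hH := hK.1
  set U : Matrix (Fin N) (Fin N) ℝ := (hH.eigenvectorUnitary : Matrix (Fin N) (Fin N) ℝ)
  set lam := hH.eigenvalues
  have hlam : ∀ i, 0 ≤ lam i := hK.eigenvalues_nonneg
  have hspec : K = U * Matrix.diagonal lam * star U := by
    simpa using hH.spectral_theorem
  have hUU : star U * U = 1 := (Matrix.mem_unitaryGroup_iff').mp hH.eigenvectorUnitary.2
  have hUU' : U * star U = 1 := (Matrix.mem_unitaryGroup_iff).mp hH.eigenvectorUnitary.2
  have hd1 : ∀ (c : ℝ), c • (1 : Matrix (Fin N) (Fin N) ℝ) = Matrix.diagonal (fun _ => c) :=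
    fun c => Matrix.smul_one_eq_diagonal c
  have hpos : ∀ i, (0:ℝ) < lam i + α := fun i => by linarith [hlam i]
  -- a general conjugation lemma for products
  have hconj : ∀ (f g : Fin N → ℝ),
      (U * Matrix.diagonal f * star U) * (U * Matrix.diagonal g * star U)
        = U * Matrix.diagonal (fun i => f i * g i) * star U := by
    intro f g
    calc (U * Matrix.diagonal f * star U) * (U * Matrix.diagonal g * star U)
        = U * Matrix.diagonal f * (star U * U) * (Matrix.diagonal g * star U) := by
          simp only [Matrix.mul_assoc]
      _ = U * (Matrix.diagonal f * Matrix.diagonal g) * star U := by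
          rw [hUU, mul_one]; simp only [Matrix.mul_assoc]
      _ = U * Matrix.diagonal (fun i => f i * g i) * star U := by
          rw [Matrix.diagonal_mul_diagonal]
  have hsum : K + α • (1 : Matrix (Fin N) (Fin N) ℝ)
      = U * Matrix.diagonal (fun i => lam i + α) * star U := by
    have h1 : α • (1 : Matrix (Fin N) (Fin N) ℝ)
        = U * Matrix.diagonal (fun _ => α) * star U := by
      rw [← hd1, Matrix.mul_smul, mul_one, Matrix.smul_mul, hUU']
    conv_lhs => rw [hspec, h1]
    rw [← Matrix.add_mul, ← Matrix.mul_add, Matrix.diagonal_add]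
  have hinv : (K + α • (1 : Matrix (Fin N) (Fin N) ℝ))⁻¹
      = U * Matrix.diagonal (fun i => (lam i + α)⁻¹) * star U := by
    apply Matrix.inv_eq_right_inv
    rw [hsum, hconj]
    have : (fun i => (lam i + α) * (lam i + α)⁻¹) = fun _ => (1:ℝ) := by
      funext i
      exact mul_inv_cancel₀ (ne_of_gt (hpos i))
    rw [this, Matrix.diagonal_one, mul_one, hUU']
  have hprod : K * (K + α • (1 : Matrix (Fin N) (Fin N) ℝ))⁻¹
      = U * Matrix.diagonal (fun i => lam i * (lam i + α)⁻¹) * star U := by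
    rw [hinv]
    conv_lhs => rw [hspec]
    rw [hconj]
  have htr : (K * (K + α • (1 : Matrix (Fin N) (Fin N) ℝ))⁻¹).trace
      = ∑ i, lam i * (lam i + α)⁻¹ := by
    rw [hprod, Matrix.trace_mul_cycle, hUU, Matrix.one_mul,
      Matrix.trace_diagonal]
  have hdet : (1 + α⁻¹ • K).det = ∏ i, (1 + α⁻¹ * lam i) := by
    have h : (1 : Matrix (Fin N) (Fin N) ℝ) + α⁻¹ • K
        = U * Matrix.diagonal (fun i => 1 + α⁻¹ * lam i) * star U := by
      have h1 : (1 : Matrix (Fin N) (Fin N) ℝ) = U * Matrix.diagonal (fun _ => (1:ℝ)) * star U := by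
        rw [Matrix.diagonal_one, mul_one, hUU']
      have h2 : α⁻¹ • K = U * Matrix.diagonal (fun i => α⁻¹ * lam i) * star U := by
        have : Matrix.diagonal (fun i => α⁻¹ * lam i) = α⁻¹ • Matrix.diagonal lam := by
          rw [← Matrix.diagonal_smul]; rfl
        rw [this, Matrix.mul_smul, Matrix.smul_mul, ← hspec]
      conv_lhs => rw [h1, h2]
      rw [← Matrix.add_mul, ← Matrix.mul_add, Matrix.diagonal_add]
    rw [h, Matrix.det_mul, Matrix.det_mul, mul_comm, ← mul_assoc, ← Matrix.det_mul, hUU,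
      Matrix.det_one, one_mul, Matrix.det_diagonal]
  rw [htr, hdet]
  have hnn : ∀ i, (0:ℝ) ≤ α⁻¹ * lam i :=
    fun i => mul_nonneg (inv_nonneg.mpr hα.le) (hlam i)
  have hposd : ∀ i ∈ Finset.univ, (1 + α⁻¹ * lam i) ≠ 0 := by
    intro i _
    have := hnn i
    intro h; linarith
  rw [Real.log_prod hposd]
  apply Finset.sum_le_sum
  intro i _
  have ht : (0:ℝ) < 1 + α⁻¹ * lam i := by linarith [hnn i]
  have hlog := Real.one_sub_inv_le_log_of_pos ht
  have heq : 1 - (1 + α⁻¹ * lam i)⁻¹ = lam i * (lam i + α)⁻¹ := by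
    have hne : α + lam i ≠ 0 := by have := hlam i; intro h; linarith
    field_simp
    rw [add_comm α (lam i), mul_div_assoc, div_self (ne_of_gt (hpos i)), mul_one]
    ring
  linarith [heq ▸ hlog]
end

section
/- For a symmetric positive semidefinite real N×N matrix K and α > 0, log det(I + α^{-1}K) ≤ Tr(K(K+αI)^{-1}) · (1 + log(α^{-1}‖K‖₂ + 1)), where ‖K‖₂ denotes the largest eigenvalue of K. -/
private lemma scalar_key (x M : ℝ) (hx : 0 ≤ x) (hxM : x ≤ M) :
    Real.log (1 + x) ≤ x / (x + 1) * (1 + Real.log (M + 1)) := by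
  have hx1 : (0:ℝ) < x + 1 := by linarith
  have h1 : Real.log (1 + x) ≤ x := by
    have := Real.log_le_sub_one_of_pos (by linarith : (0:ℝ) < 1 + x)
    linarith
  have h2 : Real.log (1 + x) ≤ Real.log (M + 1) :=
    Real.log_le_log (by linarith) (by linarith)
  rw [div_mul_eq_mul_div, le_div_iff₀ hx1]
  nlinarith [mul_nonneg hx (sub_nonneg.2 h2)]

theorem logdet_le_effective_dim {N : ℕ} (hN : 0 < N) (K : Matrix (Fin N) (Fin N) ℝ)
    (hK : K.PosSemidef) (α : ℝ) (hα : 0 < α)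
    (lmax : ℝ)
    (hlmax : lmax = Finset.univ.sup'
      (by simpa [Finset.univ_nonempty_iff] using Fin.pos_iff_nonempty.mp hN)
      hK.1.eigenvalues) :
    Real.log ((1 + α⁻¹ • K).det) ≤
      (K * (K + α • (1 : Matrix (Fin N) (Fin N) ℝ))⁻¹).trace *
        (1 + Real.log (α⁻¹ * lmax + 1)) := by
  set U : Matrix (Fin N) (Fin N) ℝ := (hK.1.eigenvectorUnitary : Matrix (Fin N) (Fin N) ℝ) with hU
  set lam : Fin N → ℝ := hK.1.eigenvalues with hlam
  have hUU : U * star U = 1 := (Matrix.mem_unitaryGroup_iff).mp hK.1.eigenvectorUnitary.2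
  have hUU' : star U * U = 1 := (Matrix.mem_unitaryGroup_iff').mp hK.1.eigenvectorUnitary.2
  have hspec : K = U * Matrix.diagonal lam * star U := by
    simpa using hK.1.spectral_theorem
  have hlamnn : ∀ i, 0 ≤ lam i := fun i => hK.eigenvalues_nonneg i
  have hlamle : ∀ i, lam i ≤ lmax := fun i => hlmax ▸ Finset.le_sup' _ (Finset.mem_univ i)
  -- determinant
  have hdet : (1 + α⁻¹ • K).det = ∏ i, (1 + α⁻¹ * lam i) := by
    have hd : Matrix.diagonal (fun i => 1 + α⁻¹ * lam i)
        = 1 + α⁻¹ • Matrix.diagonal lam := by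
      ext i j
      by_cases h : i = j <;>
        simp [Matrix.diagonal_apply, Matrix.one_apply, h]
    have h1 : (1 : Matrix (Fin N) (Fin N) ℝ) + α⁻¹ • K
        = U * Matrix.diagonal (fun i => 1 + α⁻¹ * lam i) * star U := by
      rw [hd, hspec, Matrix.mul_add, Matrix.add_mul, mul_one, hUU,
        Matrix.mul_smul, Matrix.smul_mul]
    rw [h1, Matrix.det_mul, Matrix.det_mul, Matrix.det_diagonal, mul_right_comm,
      ← Matrix.det_mul, hUU, Matrix.det_one, one_mul]
  -- inverse and trace
  have hKa : K + α • (1 : Matrix (Fin N) (Fin N) ℝ)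
      = U * Matrix.diagonal (fun i => lam i + α) * star U := by
    have hd : Matrix.diagonal (fun i => lam i + α)
        = Matrix.diagonal lam + α • 1 := by
      ext i j
      by_cases h : i = j <;>
        simp [Matrix.diagonal_apply, Matrix.one_apply, h]
    rw [hd, hspec, Matrix.mul_add, Matrix.add_mul, Matrix.mul_smul, Matrix.smul_mul,
      mul_one, hUU]
  have hinv : (K + α • (1 : Matrix (Fin N) (Fin N) ℝ))⁻¹
      = U * Matrix.diagonal (fun i => (lam i + α)⁻¹) * star U := by
    apply Matrix.inv_eq_right_inv
    rw [hKa]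
    calc (U * Matrix.diagonal (fun i => lam i + α) * star U)
          * (U * Matrix.diagonal (fun i => (lam i + α)⁻¹) * star U)
        = U * (Matrix.diagonal (fun i => lam i + α) * (star U * U)
            * Matrix.diagonal (fun i => (lam i + α)⁻¹)) * star U := by noncomm_ring
      _ = 1 := by
          rw [hUU', mul_one, Matrix.diagonal_mul_diagonal]
          have : (fun i => (lam i + α) * (lam i + α)⁻¹) = fun _ => (1:ℝ) := by
            funext i
            exact mul_inv_cancel₀ (by have := hlamnn i; positivity)
          rw [this, Matrix.diagonal_one, mul_one, hUU]
  have htr : (K * (K + α • (1 : Matrix (Fin N) (Fin N) ℝ))⁻¹).trace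
      = ∑ i, lam i * (lam i + α)⁻¹ := by
    rw [hinv, hspec]
    have : (U * Matrix.diagonal lam * star U)
          * (U * Matrix.diagonal (fun i => (lam i + α)⁻¹) * star U)
        = U * (Matrix.diagonal lam * (star U * U)
            * Matrix.diagonal (fun i => (lam i + α)⁻¹)) * star U := by noncomm_ring
    rw [this, hUU', mul_one, Matrix.diagonal_mul_diagonal,
      Matrix.trace_mul_cycle, hUU', one_mul, Matrix.trace_diagonal]
  -- put together
  rw [hdet, htr]
  have hpos : ∀ i ∈ Finset.univ, 1 + α⁻¹ * lam i ≠ 0 := by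
    intro i _
    have := hlamnn i
    positivity
  rw [Real.log_prod hpos, Finset.sum_mul]
  apply Finset.sum_le_sum
  intro i _
  have hx : 0 ≤ α⁻¹ * lam i := by have := hlamnn i; positivity
  have hxM : α⁻¹ * lam i ≤ α⁻¹ * lmax :=
    mul_le_mul_of_nonneg_left (hlamle i) (by positivity)
  have key := scalar_key (α⁻¹ * lam i) (α⁻¹ * lmax) hx hxM
  have hratio : α⁻¹ * lam i / (α⁻¹ * lam i + 1) = lam i * (lam i + α)⁻¹ := by
    have h1 : lam i + α ≠ 0 := by have := hlamnn i; positivity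
    have h2 : α ≠ 0 := ne_of_gt hα
    field_simp
  rw [hratio] at key
  exact key
end
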